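/- Let d ≥ 1, let A be a real orthogonal d×d matrix, and let R : ℝ → (d×d real matrices) be continuous on [0, 2π] with R(t) symmetric for every t ∈ [0, 2π]. Then there exists m ∈ ℕ with the following property: for every subspace W of the space of functions ℝ → ℝ^d such that every f ∈ W is continuously differentiable and satisfies f(2π) = A·f(0), and such that every nonzero f ∈ W satisfies ∫₀^{2π} ( ‖f'(t)‖² − ⟨R(t)·f(t), f(t)⟩ ) dt < 0, if W is finite-dimensional then dim W ≤ m. (Equivalently: the index form is negative definite only on subspaces of uniformly bounded dimension, so the negative space is finite dimensional.) -/

import Mathlib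

open Matrix Real MeasureTheory

/-- Cauchy–Schwarz for interval integrals of a continuous function. -/
lemma sq_integral_le (g : ℝ → ℝ) (hg : Continuous g) {a b : ℝ} (hab : a ≤ b) :
    (∫ x in a..b, g x) ^ 2 ≤ (b - a) * ∫ x in a..b, (g x) ^ 2 := by
  set G : ℝ → ℝ := fun t => ∫ x in a..t, g x with hG
  set Q : ℝ → ℝ := fun t => ∫ x in a..t, (g x) ^ 2 with hQ
  set φ : ℝ → ℝ := fun t => (t - a) * Q t - (G t) ^ 2 with hφ
  have hgsq : Continuous fun x => (g x) ^ 2 := hg.pow 2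
  have hGd : ∀ t, HasDerivAt G (g t) t := fun t => (hg.integral_hasStrictDerivAt a t).hasDerivAt
  have hQd : ∀ t, HasDerivAt Q ((g t) ^ 2) t := fun t =>
    (hgsq.integral_hasStrictDerivAt a t).hasDerivAt
  have hφd : ∀ t, HasDerivAt φ (Q t + (t - a) * (g t) ^ 2 - 2 * G t * g t) t := by
    intro t
    have h1 : HasDerivAt (fun t => (t - a) * Q t) (1 * Q t + (t - a) * (g t) ^ 2) t :=
      ((hasDerivAt_id t).sub_const a).mul (hQd t)
    have h2 : HasDerivAt (fun t => (G t) ^ 2) (2 * G t * g t) t := by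
      have := (hGd t).fun_pow 2
      simpa [mul_comm, mul_assoc, mul_left_comm] using this
    simpa [one_mul] using h1.fun_sub h2
  have key : ∀ t ∈ Set.Icc a b, 0 ≤ Q t + (t - a) * (g t) ^ 2 - 2 * G t * g t := by
    intro t ht
    have hta : a ≤ t := ht.1
    have hrw : Q t + (t - a) * (g t) ^ 2 - 2 * G t * g t
        = ∫ x in a..t, (g x - g t) ^ 2 := by
      have hc : ∀ x ∈ Set.uIcc a t, (g x - g t) ^ 2
          = (g x) ^ 2 - 2 * g t * g x + (g t) ^ 2 := by
        intro x _; ring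
      rw [intervalIntegral.integral_congr hc,
        intervalIntegral.integral_add (f := fun x => g x ^ 2 - 2 * g t * g x) (g := fun _ => g t ^ 2)
          ((hgsq.sub (continuous_const.mul hg)).intervalIntegrable a t)
          (continuous_const.intervalIntegrable a t),
        intervalIntegral.integral_sub (g := fun x => 2 * g t * g x) (hgsq.intervalIntegrable a t)
          ((continuous_const.mul hg).intervalIntegrable a t),
        intervalIntegral.integral_const_mul, intervalIntegral.integral_const]
      simp only [smul_eq_mul, hG, hQ]
      ring
    rw [hrw]
    exact intervalIntegral.integral_nonneg hta (fun x _ => sq_nonneg _)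
  have hφdiff : Differentiable ℝ φ := fun t => (hφd t).differentiableAt
  have hmono : MonotoneOn φ (Set.Icc a b) := by
    apply monotoneOn_of_deriv_nonneg (convex_Icc a b) hφdiff.continuous.continuousOn
      hφdiff.differentiableOn
    intro x hx
    rw [interior_Icc] at hx
    rw [(hφd x).deriv]
    exact key x ⟨le_of_lt hx.1, le_of_lt hx.2⟩
  have h0 : φ a = 0 := by simp [hφ, hG, hQ]
  have hb := hmono (Set.left_mem_Icc.2 hab) (Set.right_mem_Icc.2 hab) hab
  rw [h0] at hb
  have : 0 ≤ (b - a) * Q b - (G b) ^ 2 := hb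
  linarith

/-- Given an orthogonal matrix `A` and a continuous family `R(t)` of
symmetric matrices on `[0, 2π]`, there is a uniform bound `m` on the dimension of any
finite-dimensional subspace `W` of periodic `C¹` fields (`f(2π) = A·f(0)`) on which the
index form `H(f, f) = ∫₀^{2π} (‖f'‖² − ⟨R f, f⟩) dt` is negative definite. -/
theorem negative_space_of_index_form_finiteDimensional
    (d : ℕ) (hd : 1 ≤ d)
    (A : Matrix (Fin d) (Fin d) ℝ) (hA : Aᵀ * A = 1)
    (R : ℝ → Matrix (Fin d) (Fin d) ℝ)
    (hRcont : ContinuousOn R (Set.Icc 0 (2 * π)))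
    (hRsymm : ∀ t ∈ Set.Icc (0 : ℝ) (2 * π), (R t)ᵀ = R t) :
    ∃ m : ℕ, ∀ W : Submodule ℝ (ℝ → (Fin d → ℝ)),
      (∀ f ∈ W, ContDiff ℝ 1 f ∧ f (2 * π) = A.mulVec (f 0)) →
      (∀ f ∈ W, f ≠ 0 →
        (∫ t in (0 : ℝ)..(2 * π),
          (deriv f t ⬝ᵥ deriv f t - (R t).mulVec (f t) ⬝ᵥ f t)) < 0) →
      FiniteDimensional ℝ ↥W →
      Module.finrank ℝ ↥W ≤ m := by
  have hπ : (0:ℝ) < π := Real.pi_pos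
  have h2π : (0:ℝ) < 2 * π := by positivity
  -- entrywise bound on R
  set SR : ℝ → ℝ := fun t => ∑ i, ∑ j, |R t i j| with hSR
  have hRent : ∀ (i j : Fin d), ContinuousOn (fun t => R t i j) (Set.Icc 0 (2*π)) :=
    fun i j => (continuous_apply j).comp_continuousOn
      ((continuous_apply i).comp_continuousOn hRcont)
  have hSRcont : ContinuousOn SR (Set.Icc 0 (2*π)) := by
    apply continuousOn_finset_sum
    intro i _
    apply continuousOn_finset_sum
    intro j _
    exact (hRent i j).abs
  obtain ⟨C0, hC0⟩ := isCompact_Icc.exists_bound_of_continuousOn hSRcont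
  set C : ℝ := max C0 0 with hCdef
  have hC : 0 ≤ C := le_max_right _ _
  have hSRle : ∀ t ∈ Set.Icc (0:ℝ) (2*π), SR t ≤ C :=
    fun t ht => (le_abs_self _).trans ((hC0 t ht).trans (le_max_left _ _))
  -- choose number of sample intervals
  set k : ℕ := ⌈(2*π)^2 * C⌉₊ + 1 with hkdef
  have hk0 : (0:ℝ) < (k:ℝ) := by positivity
  have hkC : (2*π)^2 * C ≤ (k:ℝ) := by
    refine (Nat.le_ceil _).trans ?_
    exact_mod_cast Nat.le_succ _
  refine ⟨(k+1)*d, ?_⟩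
  intro W hW1 hW2 hWfd
  -- sampling linear map
  let Φ : W →ₗ[ℝ] (Fin (k+1) → Fin d → ℝ) :=
    { toFun := fun f i => (f : ℝ → Fin d → ℝ) (2*π*(i:ℕ)/k)
      map_add' := fun f g => rfl
      map_smul' := fun c f => rfl }
  have hinj : Function.Injective Φ := by
    rw [← LinearMap.ker_eq_bot, LinearMap.ker_eq_bot']
    intro f hf
    set F : ℝ → Fin d → ℝ := (f : ℝ → Fin d → ℝ) with hFdef
    have hsamp : ∀ i : Fin (k+1), F (2*π*(i:ℕ)/k) = 0 := fun i => congrFun hf i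
    by_contra hne
    have hFne : F ≠ 0 := fun h => hne (Subtype.ext h)
    have hF1 : ContDiff ℝ 1 F := (hW1 F f.2).1
    have hFc : Continuous F := hF1.continuous
    have hd' : Differentiable ℝ F := hF1.differentiable one_ne_zero
    have hdc : Continuous (deriv F) := hF1.continuous_deriv le_rfl
    set D : ℝ → ℝ := fun s => deriv F s ⬝ᵥ deriv F s with hDdef
    have hDc : Continuous D := by
      apply continuous_finset_sum
      intro j _
      exact ((continuous_apply j).comp hdc).mul ((continuous_apply j).comp hdc)
    set I' : ℝ := ∫ t in (0:ℝ)..(2*π), D t with hI'def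
    have hI'0 : 0 ≤ I' := by
      apply intervalIntegral.integral_nonneg h2π.le
      intro x _
      exact Finset.sum_nonneg fun j _ => mul_self_nonneg _
    -- key pointwise estimate
    have key : ∀ t ∈ Set.Icc (0:ℝ) (2*π), F t ⬝ᵥ F t ≤ (2*π/k) * I' := by
      intro t ht
      set n : ℕ := ⌊t * k / (2*π)⌋₊ with hndef
      have hnk : n ≤ k := by
        have h1 : t * k / (2*π) ≤ (k:ℝ) := by
          rw [div_le_iff₀ h2π]
          nlinarith [ht.2, hk0]
        calc n ≤ ⌊(k:ℝ)⌋₊ := Nat.floor_mono h1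
          _ = k := Nat.floor_natCast k
      set a : ℝ := 2*π*n/k with hadef
      have ha0 : (0:ℝ) ≤ a := by rw [hadef]; exact div_nonneg (by positivity) hk0.le
      have hat : a ≤ t := by
        have h1 : (n:ℝ) ≤ t * k / (2*π) := Nat.floor_le (div_nonneg (mul_nonneg ht.1 hk0.le) h2π.le)
        rw [le_div_iff₀ h2π] at h1
        rw [hadef, div_le_iff₀ hk0]
        nlinarith
      have hta : t - a ≤ 2*π/k := by
        have h1 : t * k / (2*π) < (n:ℝ) + 1 := Nat.lt_floor_add_one _
        rw [div_lt_iff₀ h2π] at h1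
        have h2 : t ≤ 2*π*n/k + 2*π/k := by
          rw [← add_div, le_div_iff₀ hk0]
          nlinarith
        rw [hadef]; linarith
      have hFa : F a = 0 := by
        have := hsamp ⟨n, by omega⟩
        simpa [hadef] using this
      have hcoord : ∀ j : Fin d,
          (F t j)^2 ≤ (2*π/k) * ∫ s in (0:ℝ)..(2*π), (deriv F s j)^2 := by
        intro j
        set g : ℝ → ℝ := fun s => deriv F s j with hgdef
        have hgc : Continuous g := (continuous_apply j).comp hdc
        have hftc : ∫ s in a..t, g s = F t j - F a j := by
          apply intervalIntegral.integral_eq_sub_of_hasDerivAt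
          · intro x hx
            have hx1 : HasDerivAt F (deriv F x) x := (hd' x).hasDerivAt
            have := (ContinuousLinearMap.proj (R := ℝ) (φ := fun _ : Fin d => ℝ)
              j).hasFDerivAt.comp_hasDerivAt x hx1
            exact this
          · exact hgc.intervalIntegrable _ _
        have hcs := sq_integral_le g hgc hat
        have hsub : ∫ s in a..t, (g s)^2 ≤ ∫ s in (0:ℝ)..(2*π), (g s)^2 :=
          intervalIntegral.integral_mono_interval ha0 hat ht.2
            (MeasureTheory.ae_of_all _ fun x => sq_nonneg _)
            ((hgc.pow 2).intervalIntegrable _ _)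
        have h0 : 0 ≤ ∫ s in a..t, (g s)^2 :=
          intervalIntegral.integral_nonneg hat fun x _ => sq_nonneg _
        calc (F t j)^2 = (∫ s in a..t, g s)^2 := by rw [hftc, hFa]; simp
          _ ≤ (t - a) * ∫ s in a..t, (g s)^2 := hcs
          _ ≤ (2*π/k) * ∫ s in (0:ℝ)..(2*π), (g s)^2 :=
            mul_le_mul hta hsub h0 (by positivity)
      have hsum : F t ⬝ᵥ F t = ∑ j, (F t j)^2 := by
        simp [dotProduct, sq]
      rw [hsum]
      calc ∑ j, (F t j)^2
          ≤ ∑ j, (2*π/k) * ∫ s in (0:ℝ)..(2*π), (deriv F s j)^2 :=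
            Finset.sum_le_sum fun j _ => hcoord j
        _ = (2*π/k) * ∑ j, ∫ s in (0:ℝ)..(2*π), (deriv F s j)^2 := by
            rw [Finset.mul_sum]
        _ = (2*π/k) * I' := by
            congr 1
            rw [← intervalIntegral.integral_finset_sum]
            · apply intervalIntegral.integral_congr
              intro s _
              simp [hDdef, dotProduct, sq]
            · intro j _
              exact (((continuous_apply j).comp hdc).pow 2).intervalIntegrable _ _
    -- the R-term
    set P : ℝ → ℝ := fun t => (R t).mulVec (F t) ⬝ᵥ F t with hPdef
    have hPsum : ∀ t, P t = ∑ i, ∑ j, R t i j * F t j * F t i := by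
      intro t
      simp [hPdef, Matrix.mulVec, dotProduct, Finset.sum_mul]
    have hPc : ContinuousOn P (Set.Icc 0 (2*π)) := by
      have : ContinuousOn (fun t => ∑ i, ∑ j, R t i j * F t j * F t i)
          (Set.Icc 0 (2*π)) := by
        apply continuousOn_finset_sum
        intro i _
        apply continuousOn_finset_sum
        intro j _
        exact (((hRent i j).mul ((continuous_apply j).comp hFc).continuousOn).mul
          ((continuous_apply i).comp hFc).continuousOn)
      exact this.congr fun t _ => hPsum t
    have hPineq : ∀ t ∈ Set.Icc (0:ℝ) (2*π), P t ≤ C * (F t ⬝ᵥ F t) := by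
      intro t ht
      have hFF : 0 ≤ F t ⬝ᵥ F t := Finset.sum_nonneg fun j _ => mul_self_nonneg _
      have hterm : ∀ i j : Fin d, R t i j * F t j * F t i ≤ |R t i j| * (F t ⬝ᵥ F t) := by
        intro i j
        have hi : (F t i)^2 ≤ F t ⬝ᵥ F t := by
          simpa [dotProduct, sq] using
            Finset.single_le_sum (f := fun i => (F t i)^2)
              (fun _ _ => sq_nonneg _) (Finset.mem_univ i)
        have hj : (F t j)^2 ≤ F t ⬝ᵥ F t := by
          simpa [dotProduct, sq] using
            Finset.single_le_sum (f := fun i => (F t i)^2)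
              (fun _ _ => sq_nonneg _) (Finset.mem_univ j)
        have h1 : R t i j * F t j * F t i ≤ |R t i j| * (|F t j| * |F t i|) := by
          calc R t i j * F t j * F t i ≤ |R t i j * F t j * F t i| := le_abs_self _
            _ = |R t i j| * (|F t j| * |F t i|) := by rw [abs_mul, abs_mul, mul_assoc]
        have h2 : |F t j| * |F t i| ≤ F t ⬝ᵥ F t := by
          nlinarith [sq_nonneg (|F t j| - |F t i|), sq_abs (F t j), sq_abs (F t i)]
        calc R t i j * F t j * F t i ≤ |R t i j| * (|F t j| * |F t i|) := h1
          _ ≤ |R t i j| * (F t ⬝ᵥ F t) := by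
            exact mul_le_mul_of_nonneg_left h2 (abs_nonneg _)
      calc P t = ∑ i, ∑ j, R t i j * F t j * F t i := hPsum t
        _ ≤ ∑ i, ∑ j, |R t i j| * (F t ⬝ᵥ F t) :=
          Finset.sum_le_sum fun i _ => Finset.sum_le_sum fun j _ => hterm i j
        _ = SR t * (F t ⬝ᵥ F t) := by
          rw [hSR]
          simp only [← Finset.sum_mul]
        _ ≤ C * (F t ⬝ᵥ F t) := mul_le_mul_of_nonneg_right (hSRle t ht) hFF
    -- integrability and the contradiction
    have huIcc : Set.uIcc (0:ℝ) (2*π) = Set.Icc 0 (2*π) := Set.uIcc_of_le h2π.le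
    have hPi : IntervalIntegrable P volume 0 (2*π) :=
      (huIcc ▸ hPc).intervalIntegrable
    have hDi : IntervalIntegrable D volume 0 (2*π) := hDc.intervalIntegrable _ _
    have hneg := hW2 F f.2 hFne
    rw [intervalIntegral.integral_sub hDi hPi] at hneg
    have hFFc : Continuous (fun t => F t ⬝ᵥ F t) := by
      apply continuous_finset_sum
      intro j _
      exact ((continuous_apply j).comp hFc).mul ((continuous_apply j).comp hFc)
    have h1 : ∫ t in (0:ℝ)..(2*π), P t ≤ ∫ t in (0:ℝ)..(2*π), C * (F t ⬝ᵥ F t) :=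
      intervalIntegral.integral_mono_on h2π.le hPi
        ((continuous_const.mul hFFc).intervalIntegrable _ _) hPineq
    have h2 : ∫ t in (0:ℝ)..(2*π), C * (F t ⬝ᵥ F t)
        ≤ ∫ t in (0:ℝ)..(2*π), C * ((2*π/k) * I') := by
      apply intervalIntegral.integral_mono_on h2π.le
        ((continuous_const.mul hFFc).intervalIntegrable _ _)
        (continuous_const.intervalIntegrable _ _)
      intro t ht
      exact mul_le_mul_of_nonneg_left (key t ht) hC
    have h3 : ∫ t in (0:ℝ)..(2*π), C * ((2*π/k) * I') = (2*π) * (C * ((2*π/k) * I')) := by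
      rw [intervalIntegral.integral_const, smul_eq_mul, sub_zero]
    have h4 : (2*π) * (C * ((2*π/k) * I')) ≤ I' := by
      have hcoef : (2*π)^2 * C / k ≤ 1 := (div_le_one hk0).2 hkC
      have : (2*π) * (C * ((2*π/k) * I')) = ((2*π)^2 * C / k) * I' := by ring
      rw [this]
      exact mul_le_of_le_one_left hI'0 hcoef
    have : I' < I' := by
      have := h1.trans (h2.trans_eq h3)
      linarith
    exact absurd this (lt_irrefl _)
  have hfin : Module.finrank ℝ ↥W ≤ Module.finrank ℝ (Fin (k+1) → Fin d → ℝ) :=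
    LinearMap.finrank_le_finrank_of_injective hinj
  have hrk : Module.finrank ℝ (Fin (k+1) → Fin d → ℝ) = (k+1)*d := by
    rw [Module.finrank_pi_fintype]
    simp [Module.finrank_pi]
  rw [hrk] at hfin
  exact hfin
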